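/- Let α = (α_1, …, α_d) ∈ (0,∞)^d, h(α) = min_j α_j, and p(α) = |{ j : α_j = h(α) }|. Define a(d, r, α) = |{ n ∈ ℤ_{≥0}^d : ∏_{j=1}^d (1 + n_j)^{α_j} < r }| for r > 1. Then a(d, r, α) ≍_{d,α} r^{1/h(α)} (log r)^{p(α)−1}, i.e., there are constants depending only on d and α bounding a(d,r,α) above and below by multiples of r^{1/h(α)} (log r)^{p(α)−1} for large r. -/

import Mathlib

open Real Finset

lemma my_pow_sub (a b : ℕ) (hba : b ≤ a) : ((2:ℝ))^(a-b) = 2^a * ((2:ℝ)⁻¹)^b := by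
  have h1 : (2:ℝ)^(a-b) * 2^b = 2^a := by
    rw [← pow_add]
    congr 1
    omega
  have h2 : ((2:ℝ)^b) ≠ 0 := by positivity
  rw [inv_pow]
  field_simp
  linarith [h1]

lemma my_dyadic_sum (m : ℕ) :
    ∑ x ∈ Finset.range (2^(m+1) - 1), ((2:ℝ))⁻¹ ^ (Nat.log 2 (x+1)) = m + 1 := by
  induction m with
  | zero => norm_num
  | succ m ih =>
    have h1 : 2^(m+1) - 1 ≤ 2^(m+2) - 1 :=
      Nat.sub_le_sub_right (Nat.pow_le_pow_right (by norm_num) (by omega)) 1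
    rw [← Finset.sum_range_add_sum_Ico _ h1, ih]
    have hpow : (2:ℕ)^(m+2) = 2*2^(m+1) := by ring
    have hpos : 1 ≤ (2:ℕ)^(m+1) := Nat.one_le_two_pow
    have hconst : ∀ x ∈ Finset.Ico (2^(m+1) - 1) (2^(m+2) - 1),
        ((2:ℝ))⁻¹ ^ (Nat.log 2 (x+1)) = ((2:ℝ))⁻¹ ^ (m+1) := by
      intro x hx
      simp only [Finset.mem_Ico] at hx
      have hlog : Nat.log 2 (x+1) = m+1 := by
        apply Nat.log_eq_of_pow_le_of_lt_pow <;> omega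
      rw [hlog]
    rw [Finset.sum_congr rfl hconst, Finset.sum_const, Nat.card_Ico]
    have hcard : 2^(m+2) - 1 - (2^(m+1) - 1) = 2^(m+1) := by omega
    rw [hcard, nsmul_eq_mul]
    push_cast
    rw [inv_pow]
    field_simp

lemma my_geom_le (q : ℝ) (h0 : 0 ≤ q) (h1 : q < 1) (N : ℕ) :
    ∑ x ∈ Finset.range N, q ^ x ≤ (1 - q)⁻¹ := by
  rw [geom_sum_eq (by linarith) N]
  rw [div_le_iff_of_neg (by linarith : q - 1 < 0)]
  have hz : 0 ≤ q ^ N := pow_nonneg h0 N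
  have h2 : (0:ℝ) < 1 - q := by linarith
  have key : (1-q)⁻¹ * (q-1) = -1 := by field_simp; ring
  linarith

lemma my_level_sum (T p : ℕ) :
    ∑ t ∈ Finset.range (T+1), ((t:ℝ)+1)^p * 2^t ≤ ((T:ℝ)+1)^p * 2^(T+1) := by
  calc ∑ t ∈ Finset.range (T+1), ((t:ℝ)+1)^p * 2^t
      ≤ ∑ t ∈ Finset.range (T+1), ((T:ℝ)+1)^p * 2^t := by
        apply Finset.sum_le_sum
        intro t ht
        simp only [Finset.mem_range] at ht
        have h1 : ((t:ℝ)+1)^p ≤ ((T:ℝ)+1)^p := by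
          apply pow_le_pow_left₀ (by positivity)
          have : (t:ℝ) ≤ T := by exact_mod_cast Nat.lt_succ_iff.mp ht
          linarith
        have h2 : (0:ℝ) ≤ 2^t := by positivity
        exact mul_le_mul_of_nonneg_right h1 h2
    _ = ((T:ℝ)+1)^p * ∑ t ∈ Finset.range (T+1), (2:ℝ)^t := by rw [Finset.mul_sum]
    _ ≤ ((T:ℝ)+1)^p * 2^(T+1) := by
        apply mul_le_mul_of_nonneg_left _ (by positivity)
        rw [geom_sum_eq (by norm_num) (T+1)]
        have : (0:ℝ) < 2 - 1 := by norm_num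
        rw [div_le_iff₀ this]
        nlinarith [pow_nonneg (by norm_num : (0:ℝ) ≤ 2) (T+1)]

lemma my_rpow_sum {ι : Type*} (a : ℝ) (ha : 0 < a) (s : Finset ι) (f : ι → ℝ) :
    a ^ (∑ i ∈ s, f i) = ∏ i ∈ s, a ^ (f i) := by
  classical
  induction s using Finset.cons_induction with
  | empty => simp
  | cons i s his ih =>
    rw [Finset.sum_cons, Finset.prod_cons, Real.rpow_add ha, ih]

lemma my_fiber_sum_bound {d : ℕ} (Sf : Finset (Fin d)) (j0 : Fin d) (hj0 : j0 ∈ Sf)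
    (s : Finset (Fin d → ℕ)) (X : ℝ) (hX : 0 ≤ X)
    (hcon : ∀ k ∈ s, ((∑ j ∈ Sf, k j : ℕ) : ℝ) < X)
    (hdet : ∀ k ∈ s, ∀ k' ∈ s, (∀ j ∈ Sf.erase j0, k j = k' j) →
      (∑ j ∈ Sf, k j = ∑ j ∈ Sf, k' j) → k = k') :
    ∑ k ∈ s, (2:ℝ) ^ (∑ j ∈ Sf, k j) ≤ 2 * (X+1)^(Sf.card - 1) * (2:ℝ) ^ X := by
  classical
  set q := Sf.card with hq
  set σ : (Fin d → ℕ) → ℕ := fun k => ∑ j ∈ Sf, k j with hσ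
  set T : ℕ := ⌊X⌋₊ with hT
  have hmaps : ∀ k ∈ s, σ k ∈ Finset.range (T+1) := by
    intro k hk
    simp only [Finset.mem_range, Nat.lt_succ_iff]
    exact Nat.le_floor (le_of_lt (hcon k hk))
  have hsplit : ∑ k ∈ s, (2:ℝ) ^ (σ k)
      = ∑ t ∈ Finset.range (T+1), ∑ k ∈ s.filter (fun k => σ k = t), (2:ℝ) ^ (σ k) :=
    (Finset.sum_fiberwise_of_maps_to hmaps _).symm
  have hcard : ∀ t, ((s.filter (fun k => σ k = t)).card : ℝ) ≤ ((t:ℝ)+1)^(q-1) := by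
    intro t
    have hinj : (s.filter (fun k => σ k = t)).card ≤
        (Fintype.piFinset (fun j : Fin d =>
          if j ∈ Sf.erase j0 then Finset.range (t+1) else ({0} : Finset ℕ))).card := by
      apply Finset.card_le_card_of_injOn
        (fun k j => if j ∈ Sf.erase j0 then k j else 0)
      · intro k hk
        simp only [Finset.mem_coe, Finset.mem_filter] at hk ⊢
        rw [Fintype.mem_piFinset]
        intro j
        by_cases hj : j ∈ Sf.erase j0
        · simp only [hj, if_pos, Finset.mem_range, Nat.lt_succ_iff]
          rw [← hk.2]
          exact Finset.single_le_sum (fun i _ => Nat.zero_le _) (Finset.mem_of_mem_erase hj)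
        · simp [hj]
      · intro k hk k' hk' heq
        simp only [Finset.coe_filter, Set.mem_setOf_eq] at hk hk'
        apply hdet k hk.1 k' hk'.1
        · intro j hj
          have := congrFun heq j
          simpa [hj] using this
        · show σ k = σ k'
          rw [hk.2, hk'.2]
    have hcardpi : (Fintype.piFinset (fun j : Fin d =>
        if j ∈ Sf.erase j0 then Finset.range (t+1) else ({0} : Finset ℕ))).card
        = (t+1)^(q-1) := by
      rw [Fintype.card_piFinset]
      have : ∀ j : Fin d, (if j ∈ Sf.erase j0 then Finset.range (t+1)
          else ({0} : Finset ℕ)).card = if j ∈ Sf.erase j0 then t+1 else 1 := by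
        intro j; by_cases hj : j ∈ Sf.erase j0 <;> simp [hj]
      rw [Finset.prod_congr rfl (fun j _ => this j)]
      rw [Finset.prod_ite_mem, Finset.univ_inter, Finset.prod_const]
      rw [Finset.card_erase_of_mem hj0]
    calc ((s.filter (fun k => σ k = t)).card : ℝ)
        ≤ ((t+1)^(q-1) : ℕ) := by exact_mod_cast hinj.trans_eq hcardpi
      _ = ((t:ℝ)+1)^(q-1) := by push_cast; ring
  calc ∑ k ∈ s, (2:ℝ) ^ (σ k)
      = ∑ t ∈ Finset.range (T+1), ∑ k ∈ s.filter (fun k => σ k = t), (2:ℝ) ^ (σ k) := hsplit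
    _ = ∑ t ∈ Finset.range (T+1), ((s.filter (fun k => σ k = t)).card : ℝ) * 2^t := by
        apply Finset.sum_congr rfl
        intro t _
        rw [Finset.sum_congr rfl (fun k hk => by
          simp only [Finset.mem_filter] at hk
          rw [hk.2]), Finset.sum_const, nsmul_eq_mul]
    _ ≤ ∑ t ∈ Finset.range (T+1), ((t:ℝ)+1)^(q-1) * 2^t := by
        apply Finset.sum_le_sum
        intro t _
        exact mul_le_mul_of_nonneg_right (hcard t) (by positivity)
    _ ≤ ((T:ℝ)+1)^(q-1) * 2^(T+1) := my_level_sum T (q-1)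
    _ ≤ (X+1)^(q-1) * (2 * (2:ℝ) ^ X) := by
        apply mul_le_mul
        · apply pow_le_pow_left₀ (by positivity)
          have := Nat.floor_le hX
          linarith [this]
        · rw [pow_succ, mul_comm]
          apply mul_le_mul_of_nonneg_left _ (by norm_num)
          rw [← Real.rpow_natCast 2 T]
          exact Real.rpow_le_rpow_of_exponent_le (by norm_num) (Nat.floor_le hX)
        · positivity
        · positivity
    _ = 2 * (X+1)^(q-1) * (2:ℝ) ^ X := by ring

lemma my_upper_sum (d : ℕ) (α : Fin d → ℝ) (hα : ∀ j, 0 < α j) (h : ℝ) (hh : 0 < h)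
    (hle : ∀ j, h ≤ α j) (j0 : Fin d) (hj0 : α j0 = h) (p : ℕ)
    (hp : p = (univ.filter fun j => α j = h).card)
    (L : ℝ) (hL : 0 < L) (M : ℕ) :
    ∑ k ∈ (Fintype.piFinset fun _ : Fin d => Finset.range (M+1)).filter
        (fun k => ∑ j, α j * k j < L), ∏ j, (2:ℝ) ^ (k j)
      ≤ (∏ j, (if α j = h then (1:ℝ) else (1 - (2:ℝ) ^ (1 - α j / h))⁻¹))
          * (2 * (L/h+1)^(p-1) * (2:ℝ) ^ (L/h)) := by
  classical
  set Sf : Finset (Fin d) := univ.filter (fun j => α j = h) with hSf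
  have hj0S : j0 ∈ Sf := by simp [hSf, hj0]
  set F : Finset (Fin d → ℕ) := (Fintype.piFinset fun _ : Fin d => Finset.range (M+1)).filter
      (fun k => ∑ j, α j * k j < L) with hF
  set g : (Fin d → ℕ) → (Fin d → ℕ) := fun k j => if α j = h then 0 else k j with hg
  set B : Finset (Fin d → ℕ) :=
      Fintype.piFinset (fun j => if α j = h then ({0}:Finset ℕ) else Finset.range (M+1)) with hB
  set q : Fin d → ℝ := fun j => (2:ℝ) ^ (1 - α j / h) with hqdef
  have hq0 : ∀ j, 0 ≤ q j := fun j => Real.rpow_nonneg (by norm_num) _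
  have hq1 : ∀ j, α j ≠ h → q j < 1 := by
    intro j hne
    apply Real.rpow_lt_one_of_one_lt_of_neg (by norm_num)
    have : h < α j := lt_of_le_of_ne (hle j) (Ne.symm hne)
    have : 1 < α j / h := (one_lt_div hh).mpr this
    linarith
  set D : ℝ := 2 * (L/h+1)^(p-1) * (2:ℝ) ^ (L/h) with hD
  have hDpos : 0 < D := by
    have h1 : 0 < L/h + 1 := by have := div_pos hL hh; linarith
    rw [hD]
    exact mul_pos (mul_pos two_pos (pow_pos h1 _)) (Real.rpow_pos_of_pos two_pos _)
  have hmapsg : ∀ k ∈ F, g k ∈ B := by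
    intro k hk
    simp only [hF, Finset.mem_filter, Fintype.mem_piFinset] at hk
    rw [hB, Fintype.mem_piFinset]
    intro j
    by_cases hj : α j = h
    · simp [hg, hj]
    · simp only [hg, hj, if_neg, if_false]
      exact hk.1 j
  -- rewrite products as powers of sums
  have hprodpow : ∀ k : Fin d → ℕ, ∏ j, (2:ℝ) ^ (k j) = (2:ℝ) ^ (∑ j, k j) :=
    fun k => Finset.prod_pow_eq_pow_sum _ _ _
  rw [Finset.sum_congr rfl (fun k _ => hprodpow k)]
  rw [← Finset.sum_fiberwise_of_maps_to hmapsg (fun k => (2:ℝ) ^ (∑ j, k j))]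
  -- bound each fiber
  have hfiber : ∀ m ∈ B, ∑ k ∈ F.filter (fun k => g k = m), (2:ℝ) ^ (∑ j, k j)
      ≤ D * ∏ j, (q j) ^ (m j) := by
    intro m hm
    rw [hB, Fintype.mem_piFinset] at hm
    have hm0 : ∀ j, α j = h → m j = 0 := by
      intro j hj
      have := hm j
      simpa [hj] using this
    set β : ℝ := ∑ j, α j * m j with hβ
    have hβ0 : 0 ≤ β := Finset.sum_nonneg fun j _ => mul_nonneg (le_of_lt (hα j)) (Nat.cast_nonneg _)
    -- facts about fiber elements
    have hfib : ∀ k ∈ F.filter (fun k => g k = m),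
        (∀ j, α j ≠ h → k j = m j) ∧ (h * (∑ j ∈ Sf, k j : ℕ) + β < L) := by
      intro k hk
      simp only [Finset.mem_filter, hF] at hk
      obtain ⟨⟨hkpi, hkcon⟩, hkg⟩ := hk
      have heq : ∀ j, α j ≠ h → k j = m j := by
        intro j hj
        have := congrFun hkg j
        simpa [hg, hj] using this
      refine ⟨heq, ?_⟩
      have hsplit1 : ∑ j, α j * k j = h * (∑ j ∈ Sf, k j : ℕ) + β := by
        rw [← Finset.sum_filter_add_sum_filter_not univ (fun j => α j = h) (fun j => α j * k j)]
        push_cast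
        rw [Finset.mul_sum]
        congr 1
        · apply Finset.sum_congr rfl
          intro j hj
          simp only [Finset.mem_filter] at hj
          rw [hj.2]
        · rw [hβ, ← Finset.sum_filter_add_sum_filter_not univ (fun j => α j = h)
            (fun j => α j * m j)]
          have hz : ∑ j ∈ univ.filter (fun j => α j = h), α j * m j = 0 := by
            apply Finset.sum_eq_zero
            intro j hj
            simp only [Finset.mem_filter] at hj
            rw [hm0 j hj.2]
            simp
          rw [hz, zero_add]
          apply Finset.sum_congr rfl
          intro j hj
          simp only [Finset.mem_filter] at hj
          rw [heq j hj.2]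
      linarith [hsplit1 ▸ hkcon]
    -- sum over fiber of 2^(∑ all j) = 2^(∑ m) * 2^(∑ Sf)
    have hsum_split : ∀ k ∈ F.filter (fun k => g k = m),
        (∑ j, k j) = (∑ j ∈ Sf, k j) + (∑ j, m j) := by
      intro k hk
      obtain ⟨heq, -⟩ := hfib k hk
      rw [← Finset.sum_filter_add_sum_filter_not univ (fun j => α j = h) k]
      congr 1
      rw [← Finset.sum_filter_add_sum_filter_not univ (fun j => α j = h) m]
      have hz : ∑ j ∈ univ.filter (fun j => α j = h), m j = 0 :=
        Finset.sum_eq_zero fun j hj => hm0 j (Finset.mem_filter.mp hj).2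
      rw [hz, zero_add]
      exact Finset.sum_congr rfl fun j hj => heq j (Finset.mem_filter.mp hj).2
    by_cases hne : (F.filter (fun k => g k = m)).Nonempty
    · obtain ⟨k₀, hk₀⟩ := hne
      have hXpos : 0 ≤ (L - β)/h := by
        have := (hfib k₀ hk₀).2
        have h1 : (0:ℝ) ≤ h * (∑ j ∈ Sf, k₀ j : ℕ) := by positivity
        apply div_nonneg _ (le_of_lt hh)
        linarith
      have hcon : ∀ k ∈ F.filter (fun k => g k = m),
          ((∑ j ∈ Sf, k j : ℕ) : ℝ) < (L - β)/h := by
        intro k hk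
        have := (hfib k hk).2
        rw [lt_div_iff₀ hh]
        linarith [mul_comm h ((∑ j ∈ Sf, k j : ℕ) : ℝ)]
      have hdet : ∀ k ∈ F.filter (fun k => g k = m), ∀ k' ∈ F.filter (fun k => g k = m),
          (∀ j ∈ Sf.erase j0, k j = k' j) → (∑ j ∈ Sf, k j = ∑ j ∈ Sf, k' j) → k = k' := by
        intro k hk k' hk' hagree hsum
        funext j
        by_cases hj : α j = h
        · by_cases hjj : j = j0
          · subst hjj
            have e1 : k j + ∑ i ∈ Sf.erase j, k i = ∑ i ∈ Sf, k i :=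
              Finset.add_sum_erase Sf k hj0S
            have e2 : k' j + ∑ i ∈ Sf.erase j, k' i = ∑ i ∈ Sf, k' i :=
              Finset.add_sum_erase Sf k' hj0S
            have e3 : ∑ i ∈ Sf.erase j, k i = ∑ i ∈ Sf.erase j, k' i :=
              Finset.sum_congr rfl fun i hi => hagree i hi
            omega
          · exact hagree j (Finset.mem_erase.mpr ⟨hjj, by simp [hSf, hj]⟩)
        · rw [(hfib k hk).1 j hj, (hfib k' hk').1 j hj]
      calc ∑ k ∈ F.filter (fun k => g k = m), (2:ℝ) ^ (∑ j, k j)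
          = ∑ k ∈ F.filter (fun k => g k = m), (2:ℝ) ^ (∑ j ∈ Sf, k j) * 2 ^ (∑ j, m j) := by
            apply Finset.sum_congr rfl
            intro k hk
            rw [hsum_split k hk, pow_add]
        _ = (∑ k ∈ F.filter (fun k => g k = m), (2:ℝ) ^ (∑ j ∈ Sf, k j)) * 2 ^ (∑ j, m j) := by
            rw [Finset.sum_mul]
        _ ≤ (2 * ((L - β)/h + 1)^(Sf.card - 1) * (2:ℝ) ^ ((L - β)/h)) * 2 ^ (∑ j, m j) := by
            apply mul_le_mul_of_nonneg_right _ (by positivity)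
            exact my_fiber_sum_bound Sf j0 hj0S _ _ hXpos hcon hdet
        _ ≤ D * ∏ j, (q j) ^ (m j) := by
            have hcardSf : Sf.card = p := hp.symm
            have hββ : (L - β)/h = L/h - β/h := by ring
            have e1 : ((L - β)/h + 1)^(Sf.card - 1) ≤ (L/h + 1)^(p-1) := by
              rw [hcardSf]
              apply pow_le_pow_left₀ (by linarith)
              have : β / h ≥ 0 := div_nonneg hβ0 (le_of_lt hh)
              rw [hββ]; linarith
            have e2 : (2:ℝ) ^ ((L - β)/h) = (2:ℝ)^(L/h) * (2:ℝ)^(-(β/h)) := by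
              rw [hββ, ← Real.rpow_add two_pos]; ring_nf
            have e3 : (2:ℝ)^(-(β/h)) * (2:ℝ)^(∑ j, m j) = ∏ j, (q j) ^ (m j) := by
              have hq : ∀ j : Fin d, (q j) ^ (m j) = (2:ℝ) ^ ((1 - α j / h) * (m j : ℝ)) := by
                intro j
                rw [hqdef, ← Real.rpow_natCast ((2:ℝ) ^ (1 - α j / h)) (m j),
                  ← Real.rpow_mul (by norm_num)]
              rw [Finset.prod_congr rfl (fun j _ => hq j), ← my_rpow_sum 2 two_pos]
              have hsum : ∑ j, (1 - α j / h) * (m j : ℝ) = ((∑ j, m j : ℕ) : ℝ) - β/h := by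
                rw [hβ, Finset.sum_div]
                push_cast
                rw [← Finset.sum_sub_distrib]
                exact Finset.sum_congr rfl fun j _ => by ring
              rw [hsum, Real.rpow_sub two_pos, Real.rpow_natCast,
                Real.rpow_neg (by norm_num : (0:ℝ) ≤ 2), div_eq_mul_inv]
              ring
            calc (2 * ((L - β)/h + 1)^(Sf.card - 1) * (2:ℝ) ^ ((L - β)/h)) * 2 ^ (∑ j, m j)
                ≤ (2 * (L/h + 1)^(p-1) * (2:ℝ) ^ ((L - β)/h)) * 2 ^ (∑ j, m j) := by
                  apply mul_le_mul_of_nonneg_right _ (by positivity)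
                  apply mul_le_mul_of_nonneg_right _ (by positivity)
                  apply mul_le_mul_of_nonneg_left e1 (by norm_num)
              _ = D * ((2:ℝ)^(-(β/h)) * (2:ℝ)^(∑ j, m j)) := by
                  rw [hD, e2]; ring
              _ = D * ∏ j, (q j) ^ (m j) := by rw [e3]
    · rw [Finset.not_nonempty_iff_eq_empty] at hne
      rw [hne, Finset.sum_empty]
      apply mul_nonneg (le_of_lt hDpos)
      exact Finset.prod_nonneg fun j _ => pow_nonneg (hq0 j) _
  calc ∑ m ∈ B, ∑ k ∈ F.filter (fun k => g k = m), (2:ℝ) ^ (∑ j, k j)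
      ≤ ∑ m ∈ B, D * ∏ j, (q j) ^ (m j) := Finset.sum_le_sum hfiber
    _ = D * ∑ m ∈ B, ∏ j, (q j) ^ (m j) := by rw [Finset.mul_sum]
    _ ≤ D * ∏ j, (if α j = h then (1:ℝ) else (1 - q j)⁻¹) := by
        apply mul_le_mul_of_nonneg_left _ (le_of_lt hDpos)
        rw [hB, ← Finset.prod_univ_sum]
        apply Finset.prod_le_prod
        · intro j _
          exact Finset.sum_nonneg fun x _ => pow_nonneg (hq0 j) _
        · intro j _
          by_cases hj : α j = h
          · simp [hj]
          · simp only [hj, if_neg, if_false]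
            exact my_geom_le (q j) (hq0 j) (hq1 j hj) (M+1)
    _ = (∏ j, (if α j = h then (1:ℝ) else (1 - (2:ℝ) ^ (1 - α j / h))⁻¹)) * D := by
        rw [mul_comm]

set_option maxHeartbeats 1000000 in
/-- Anisotropic hyperbolic cross counting: with `h = min_j α_j` and `p` the number of
coordinates attaining the minimum, the count `a(d,r,α)` of `n ∈ ℤ_{≥0}^d` with
`∏_j (1+n_j)^{α_j} < r` satisfies `a(d,r,α) ≍_{d,α} r^{1/h} (log r)^{p−1}` for large `r`. -/
theorem stmt5 (d : ℕ) (hd : 0 < d) (α : Fin d → ℝ) (hα : ∀ j, 0 < α j)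
    (h : ℝ) (hle : ∀ j, h ≤ α j) (hmem : ∃ j, α j = h)
    (p : ℕ) (hp : p = (Finset.univ.filter (fun j => α j = h)).card) :
    ∃ c₁ c₂ : ℝ, 0 < c₁ ∧ 0 < c₂ ∧ ∃ R : ℝ, 1 < R ∧ ∀ r : ℝ, R ≤ r →
      c₁ * r ^ (1 / h) * (Real.log r) ^ (p - 1) ≤
        (Set.ncard {n : Fin d → ℕ | (∏ j, (1 + (n j : ℝ)) ^ (α j)) < r} : ℝ) ∧
      (Set.ncard {n : Fin d → ℕ | (∏ j, (1 + (n j : ℝ)) ^ (α j)) < r} : ℝ) ≤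
        c₂ * r ^ (1 / h) * (Real.log r) ^ (p - 1) := by
  classical
  obtain ⟨j0, hj0⟩ := hmem
  have hh : 0 < h := hj0 ▸ hα j0
  have hp1 : 1 ≤ p := by
    rw [hp]
    exact Finset.card_pos.mpr ⟨j0, by simp [hj0]⟩
  have hpd : p ≤ d := by
    rw [hp]
    calc (univ.filter fun j => α j = h).card ≤ (univ : Finset (Fin d)).card :=
          Finset.card_filter_le _ _
      _ = d := by simp
  have hdpos : (0:ℝ) < d := by exact_mod_cast hd
  have hlog2 : 0 < Real.log 2 := Real.log_pos (by norm_num)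
  set Cg : ℝ := ∏ j, (if α j = h then (1:ℝ) else (1 - (2:ℝ) ^ (1 - α j / h))⁻¹) with hCg
  have hCgpos : 0 < Cg := by
    rw [hCg]
    apply Finset.prod_pos
    intro j _
    by_cases hj : α j = h
    · simp [hj]
    · simp only [hj, if_neg, if_false]
      apply inv_pos.mpr
      have hq1 : (2:ℝ) ^ (1 - α j / h) < 1 := by
        apply Real.rpow_lt_one_of_one_lt_of_neg (by norm_num)
        have hna : h < α j := lt_of_le_of_ne (hle j) (Ne.symm hj)
        have : 1 < α j / h := (one_lt_div hh).mpr hna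
        linarith
      linarith
  set cst : ℝ := 1/(h * (d:ℝ)^2 * Real.log 2) with hcst
  have hcstpos : 0 < cst := by rw [hcst]; positivity
  set c₁ : ℝ := (2:ℝ) ^ (-((d:ℝ)+1)) * cst^(p-1) with hc₁
  set c₂ : ℝ := Cg * 2 * (2/(h * Real.log 2))^(p-1) with hc₂
  set R : ℝ := (2:ℝ) ^ (2*h*((d:ℝ)+1) + h) with hR
  have hc₁pos : 0 < c₁ := mul_pos (Real.rpow_pos_of_pos two_pos _) (pow_pos hcstpos _)
  have hc₂pos : 0 < c₂ := by
    rw [hc₂]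
    have : (0:ℝ) < 2/(h * Real.log 2) := by positivity
    positivity
  have hRpos : 0 < R := Real.rpow_pos_of_pos two_pos _
  have hRgt : 1 < R := by
    rw [hR]
    rw [Real.one_lt_rpow_iff (by norm_num)]
    left
    constructor
    · norm_num
    · positivity
  refine ⟨c₁, c₂, hc₁pos, hc₂pos, R, hRgt, ?_⟩
  intro r hr
  have hr1 : 1 < r := lt_of_lt_of_le hRgt hr
  have hr0 : 0 < r := by linarith
  have hlogr : 0 < Real.log r := Real.log_pos hr1
  set L : ℝ := Real.logb 2 r with hLdef
  have hLlog : L = Real.log r / Real.log 2 := by rw [hLdef, Real.logb]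
  have hLR : 2*h*((d:ℝ)+1) + h ≤ L := by
    rw [hLdef]
    calc 2*h*((d:ℝ)+1) + h = Real.logb 2 R := by
          rw [hR, Real.logb_rpow (by norm_num) (by norm_num)]
      _ ≤ Real.logb 2 r := (Real.logb_le_logb (by norm_num) hRpos hr0).mpr hr
  have hLpos : 0 < L := by
    have h0 : (0:ℝ) < 2*h*((d:ℝ)+1) + h := by positivity
    linarith
  have hLh : h ≤ L := by
    have h0 : (0:ℝ) ≤ 2*h*((d:ℝ)+1) := by positivity
    linarith
  have h2L : (2:ℝ) ^ L = r := Real.rpow_logb two_pos (by norm_num) hr0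
  have hrL : (2:ℝ) ^ (L/h) = r ^ (1/h) := by
    rw [show L/h = L*(1/h) by ring, Real.rpow_mul (by norm_num), h2L]
  set A : Set (Fin d → ℕ) := {n | (∏ j, (1 + (n j : ℝ)) ^ (α j)) < r} with hA
  set M : ℕ := ⌈L/h⌉₊ with hM
  set F : Finset (Fin d → ℕ) := (Fintype.piFinset fun _ : Fin d => Finset.range (M+1)).filter
      (fun k => ∑ j, α j * k j < L) with hF
  set Box : (Fin d → ℕ) → Finset (Fin d → ℕ) :=
      fun k => Fintype.piFinset (fun j => Finset.Ico (2^(k j) - 1) (2^(k j + 1) - 1)) with hBox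
  -- upper bound: covering
  have hcover : A ⊆ ↑(F.biUnion Box) := by
    intro n hn
    rw [hA, Set.mem_setOf_eq] at hn
    set k : Fin d → ℕ := fun j => Nat.log 2 (n j + 1) with hk
    have hklow : ∀ j, 2^(k j) ≤ n j + 1 := fun j => Nat.pow_log_le_self 2 (Nat.succ_ne_zero _)
    have hkhigh : ∀ j, n j + 1 < 2^(k j + 1) := fun j => Nat.lt_pow_succ_log_self (by norm_num) _
    have hsumk : ∑ j, α j * k j < L := by
      have hprod : (2:ℝ) ^ (∑ j, α j * (k j:ℝ)) ≤ ∏ j, (1 + (n j:ℝ))^(α j) := by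
        rw [my_rpow_sum 2 two_pos]
        apply Finset.prod_le_prod
        · intro j _; exact Real.rpow_nonneg (by norm_num) _
        · intro j _
          rw [mul_comm, Real.rpow_mul (by norm_num : (0:ℝ) ≤ 2), Real.rpow_natCast]
          apply Real.rpow_le_rpow (by positivity) _ (le_of_lt (hα j))
          have h1 := hklow j
          have h2 : ((2^(k j):ℕ):ℝ) ≤ ((n j + 1 : ℕ):ℝ) := by exact_mod_cast h1
          push_cast at h2
          linarith
      have h2r : (2:ℝ) ^ (∑ j, α j * (k j:ℝ)) < r := lt_of_le_of_lt hprod hn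
      have h3 := Real.logb_lt_logb (by norm_num : (1:ℝ) < 2)
        (Real.rpow_pos_of_pos two_pos _) h2r
      rwa [Real.logb_rpow (by norm_num) (by norm_num) ] at h3
    have hkM : ∀ j, k j ≤ M := by
      intro j
      have h1 : h * (k j:ℝ) ≤ α j * k j :=
        mul_le_mul_of_nonneg_right (hle j) (Nat.cast_nonneg _)
      have h2 : α j * (k j:ℝ) ≤ ∑ i, α i * (k i:ℝ) :=
        Finset.single_le_sum (fun i _ => mul_nonneg (le_of_lt (hα i)) (Nat.cast_nonneg _))
          (Finset.mem_univ j)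
      have h3 : (k j : ℝ) ≤ L/h := by
        rw [le_div_iff₀ hh]
        calc (k j:ℝ) * h = h * k j := by ring
          _ ≤ α j * k j := h1
          _ ≤ ∑ i, α i * (k i:ℝ) := h2
          _ ≤ L := le_of_lt hsumk
      exact_mod_cast h3.trans (Nat.le_ceil _)
    simp only [Finset.coe_biUnion, Set.mem_iUnion, Finset.mem_coe]
    refine ⟨k, ?_, ?_⟩
    · rw [hF, Finset.mem_filter]
      constructor
      · rw [Fintype.mem_piFinset]
        intro j
        rw [Finset.mem_range]
        exact Nat.lt_succ_of_le (hkM j)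
      · exact hsumk
    · rw [hBox, Fintype.mem_piFinset]
      intro j
      rw [Finset.mem_Ico]
      have h1 := hklow j
      have h2 := hkhigh j
      omega
  have hAfin : A.Finite := Set.Finite.subset (Finset.finite_toSet _) hcover
  -- upper bound: cardinality
  have hboxcard : ∀ k : Fin d → ℕ, ((Box k).card : ℝ) = ∏ j, (2:ℝ)^(k j) := by
    intro k
    have hN : (Box k).card = ∏ j, 2^(k j) := by
      rw [hBox, Fintype.card_piFinset]
      apply Finset.prod_congr rfl
      intro j _
      rw [Nat.card_Ico]
      have h2 : (2:ℕ)^(k j + 1) = 2*2^(k j) := by ring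
      have h3 : 1 ≤ (2:ℕ)^(k j) := Nat.one_le_two_pow
      omega
    rw [hN]
    push_cast
    rfl
  have hupper1 : (A.ncard : ℝ) ≤ ∑ kk ∈ F, ∏ j, (2:ℝ)^(kk j) := by
    have h1 : A.ncard ≤ (F.biUnion Box).card := by
      rw [← Set.ncard_coe_finset]
      exact Set.ncard_le_ncard hcover (Finset.finite_toSet _)
    have h2 : (F.biUnion Box).card ≤ ∑ kk ∈ F, (Box kk).card := Finset.card_biUnion_le
    calc (A.ncard:ℝ) ≤ ((∑ kk ∈ F, (Box kk).card : ℕ):ℝ) := by exact_mod_cast le_trans h1 h2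
      _ = ∑ kk ∈ F, ∏ j, (2:ℝ)^(kk j) := by
          rw [Nat.cast_sum]
          exact Finset.sum_congr rfl fun kk _ => hboxcard kk
  have hup : (A.ncard:ℝ) ≤ c₂ * r^(1/h) * (Real.log r)^(p-1) := by
    have h2 := my_upper_sum d α hα h hh hle j0 hj0 p hp L hLpos M
    rw [← hCg] at h2
    rw [← hF] at h2
    have hLh1 : 1 ≤ L/h := by
      rw [le_div_iff₀ hh]
      linarith
    have e1 : (L/h+1) ≤ 2/(h*Real.log 2) * Real.log r := by
      have hq : 2/(h*Real.log 2) * Real.log r = 2*(L/h) := by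
        rw [hLlog]
        field_simp
      rw [hq]
      linarith
    calc (A.ncard:ℝ) ≤ Cg * (2*(L/h+1)^(p-1)*(2:ℝ)^(L/h)) := le_trans hupper1 h2
      _ ≤ Cg * (2*((2/(h*Real.log 2))*Real.log r)^(p-1) * r^(1/h)) := by
          rw [hrL]
          apply mul_le_mul_of_nonneg_left _ (le_of_lt hCgpos)
          apply mul_le_mul_of_nonneg_right _
            (le_of_lt (Real.rpow_pos_of_pos hr0 _))
          apply mul_le_mul_of_nonneg_left
            (pow_le_pow_left₀ (by linarith) e1 _) (by norm_num)
      _ = c₂ * r^(1/h) * (Real.log r)^(p-1) := by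
          rw [hc₂, mul_pow]
          ring
  -- lower bound
  set S' : Finset (Fin d) := (univ.filter fun j => α j = h).erase j0 with hS'
  have hj0S' : j0 ∉ S' := Finset.notMem_erase _ _
  have hS'card : S'.card = p - 1 := by
    rw [hS', Finset.card_erase_of_mem (by simp [hj0]), ← hp]
  have hS'h : ∀ j ∈ S', α j = h := fun j hjS =>
    (Finset.mem_filter.mp (Finset.mem_of_mem_erase hjS)).2
  have hS'ne : ∀ j ∈ S', j ≠ j0 := fun j hjS => (Finset.mem_erase.mp hjS).1
  set m : ℕ := ⌊L/(h*(d:ℝ)^2)⌋₊ with hmdef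
  set Kf : ℕ := ⌊L/h⌋₊ with hKf
  set K : ℕ := Kf - d with hK
  have hfloorm : (m:ℝ) ≤ L/(h*(d:ℝ)^2) := Nat.floor_le (by positivity)
  have hKffacts : (p-1)*m + d + 1 ≤ Kf := by
    rw [hKf]
    apply Nat.le_floor
    have hcast1 : (((p-1)*m + d + 1 : ℕ):ℝ) = ((p-1:ℕ):ℝ)*m + d + 1 := by push_cast; ring
    rw [hcast1]
    have hpm : ((p-1:ℕ):ℝ) ≤ (d:ℝ) - 1 := by
      have : (p-1:ℕ) ≤ d - 1 := by omega
      have h2 : ((p-1:ℕ):ℝ) ≤ ((d-1:ℕ):ℝ) := by exact_mod_cast this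
      have h3 : ((d-1:ℕ):ℝ) = (d:ℝ) - 1 := by
        have : 1 ≤ d := hd
        push_cast [Nat.cast_sub this]
        ring
      linarith
    have hstep1 : ((p-1:ℕ):ℝ)*m ≤ ((d:ℝ)-1) * (L/(h*(d:ℝ)^2)) := by
      apply mul_le_mul hpm hfloorm (Nat.cast_nonneg _)
      linarith
    have hstep2 : ((d:ℝ)-1) * (L/(h*(d:ℝ)^2)) ≤ L/(2*h) := by
      have he : ((d:ℝ)-1) * (L/(h*(d:ℝ)^2)) = (((d:ℝ)-1)*L)/(h*(d:ℝ)^2) := by ring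
      rw [he, div_le_div_iff₀ (by positivity) (by positivity)]
      have hd1 : (1:ℝ) ≤ d := by exact_mod_cast hd
      nlinarith [mul_pos hh hLpos, sq_nonneg ((d:ℝ)-1),
        mul_nonneg (mul_pos hh hLpos).le (sq_nonneg ((d:ℝ)-1))]
    have hstep3 : L/(2*h) + (d:ℝ) + 1 ≤ L/h := by
      have hq1 : (d:ℝ) + 1 ≤ L/(2*h) := by
        rw [le_div_iff₀ (by positivity)]
        nlinarith [hLR]
      have hq2 : L/h = L/(2*h) + L/(2*h) := by
        field_simp
        ring
      linarith
    linarith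
  have hKfd : d + 1 ≤ Kf := by omega
  have hpmK : (p-1)*m ≤ K := by omega
  have hKcast : (K:ℝ) = (Kf:ℝ) - d := by
    rw [hK]
    push_cast [Nat.cast_sub (by omega : d ≤ Kf)]
    ring
  set T : Finset (Fin d → ℕ) := Fintype.piFinset
      (fun j => if j ∈ S' then Finset.range (2^(m+1) - 1) else ({0}:Finset ℕ)) with hT
  set σ : (Fin d → ℕ) → ℕ := fun v => ∑ j ∈ S', Nat.log 2 (v j + 1) with hσ
  have hσle : ∀ v ∈ T, σ v ≤ (p-1)*m := by
    intro v hv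
    rw [hT, Fintype.mem_piFinset] at hv
    rw [hσ]
    calc ∑ j ∈ S', Nat.log 2 (v j + 1) ≤ ∑ _j ∈ S', m := by
          apply Finset.sum_le_sum
          intro j hjS
          have h1 := hv j
          rw [if_pos hjS, Finset.mem_range] at h1
          have h2 : (2:ℕ)^(m+1) ≥ 1 := Nat.one_le_two_pow
          have hlt : v j + 1 < 2^(m+1) := by omega
          have := Nat.log_lt_of_lt_pow (by omega) hlt
          omega
      _ = S'.card * m := by rw [Finset.sum_const, smul_eq_mul]
      _ = (p-1)*m := by rw [hS'card]
  have hσK : ∀ v ∈ T, σ v ≤ K := fun v hv => le_trans (hσle v hv) hpmK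
  have hvj0 : ∀ v ∈ T, v j0 = 0 := by
    intro v hv
    rw [hT, Fintype.mem_piFinset] at hv
    have h1 := hv j0
    rw [if_neg hj0S'] at h1
    simpa using h1
  set Alow : Finset (Fin d → ℕ) := T.biUnion
      (fun v => (Finset.range (2^(K - σ v))).image (fun t => Function.update v j0 t)) with hAlow
  have hAlowcard : (Alow.card : ℝ) = (2:ℝ)^K * ∑ v ∈ T, ((2:ℝ)⁻¹)^(σ v) := by
    rw [hAlow, Finset.card_biUnion]
    · rw [Nat.cast_sum, Finset.mul_sum]
      apply Finset.sum_congr rfl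
      intro v hv
      rw [Finset.card_image_of_injective _ (Function.update_injective v j0), Finset.card_range]
      have hs : σ v ≤ K := hσK v hv
      have hc : ((2^(K - σ v):ℕ):ℝ) = (2:ℝ)^(K - σ v) := by push_cast; rfl
      rw [hc, my_pow_sub _ _ hs]
    · intro v hv w hw hvw
      rw [Function.onFun_apply, Finset.disjoint_left]
      intro x hx hx'
      rw [Finset.mem_image] at hx hx'
      obtain ⟨t, ht, rfl⟩ := hx
      obtain ⟨t', ht', heq⟩ := hx'
      apply hvw
      funext j
      by_cases hj : j = j0
      · subst hj
        rw [hvj0 v hv, hvj0 w hw]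
      · have h1 := congrFun heq j
        rw [Function.update_of_ne hj, Function.update_of_ne hj] at h1
        exact h1.symm
  have hTsum : ∑ v ∈ T, ((2:ℝ)⁻¹)^(σ v) = ((m:ℝ)+1)^(p-1) := by
    have hterm : ∀ v ∈ T, ((2:ℝ)⁻¹)^(σ v)
        = ∏ j, (if j ∈ S' then ((2:ℝ)⁻¹)^(Nat.log 2 (v j + 1)) else 1) := by
      intro v _
      rw [Finset.prod_ite_mem, Finset.univ_inter, Finset.prod_pow_eq_pow_sum]
    have hfac : ∀ j : Fin d,
        (∑ x ∈ (if j ∈ S' then Finset.range (2^(m+1) - 1) else ({0}:Finset ℕ)),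
          (if j ∈ S' then ((2:ℝ)⁻¹)^(Nat.log 2 (x+1)) else 1))
        = if j ∈ S' then ((m:ℝ)+1) else 1 := by
      intro j
      by_cases hj : j ∈ S'
      · simp only [hj, if_true]
        exact my_dyadic_sum m
      · simp [hj]
    rw [Finset.sum_congr rfl hterm, hT]
    rw [show ((m:ℝ)+1)^(p-1) = ∏ j : Fin d, (if j ∈ S' then ((m:ℝ)+1) else 1) by
      rw [Finset.prod_ite_mem, Finset.univ_inter, Finset.prod_const, hS'card]]
    rw [Finset.prod_congr rfl (fun j _ => (hfac j).symm)]
    exact (Finset.prod_univ_sum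
      (fun j => if j ∈ S' then Finset.range (2^(m+1) - 1) else ({0}:Finset ℕ))
      (fun j x => if j ∈ S' then ((2:ℝ)⁻¹)^(Nat.log 2 (x+1)) else (1:ℝ))).symm
  have hAmem : ∀ x ∈ Alow, x ∈ A := by
    intro x hx
    rw [hAlow, Finset.mem_biUnion] at hx
    obtain ⟨v, hv, hx⟩ := hx
    rw [Finset.mem_image] at hx
    obtain ⟨t, ht, rfl⟩ := hx
    rw [Finset.mem_range] at ht
    rw [hA, Set.mem_setOf_eq]
    have hvT := hv
    rw [hT, Fintype.mem_piFinset] at hvT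
    set a : Fin d → ℝ := fun j => if j = j0 then (K:ℝ) - σ v
        else if j ∈ S' then (Nat.log 2 (v j + 1) : ℝ) + 1 else 0 with ha
    have haj0 : a j0 = (K:ℝ) - σ v := by rw [ha]; simp
    have hajS : ∀ j, j ≠ j0 → j ∈ S' → a j = (Nat.log 2 (v j + 1) : ℝ) + 1 := by
      intro j hj hjS; rw [ha]; simp [hj, hjS]
    have hajO : ∀ j, j ≠ j0 → j ∉ S' → a j = 0 := by
      intro j hj hjS; rw [ha]; simp [hj, hjS]
    have hfac : ∀ j, (1 + ((Function.update v j0 t) j : ℝ))^(α j) ≤ ((2:ℝ) ^ (a j)) ^ h := by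
      intro j
      by_cases hj : j = j0
      · rw [hj, Function.update_self]
        have h1 : (1 + (t:ℝ)) ≤ (2:ℝ)^((K:ℝ) - (σ v:ℝ)) := by
          have h2 : t + 1 ≤ 2^(K - σ v) := ht
          have h3 : ((t + 1 : ℕ):ℝ) ≤ ((2^(K - σ v) : ℕ):ℝ) := by exact_mod_cast h2
          have h4 : ((2^(K - σ v) : ℕ):ℝ) = (2:ℝ)^((K:ℝ) - (σ v:ℝ)) := by
            push_cast
            rw [← Real.rpow_natCast 2 (K - σ v)]
            congr 1
            push_cast [Nat.cast_sub (hσK v hv)]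
            ring
          rw [h4] at h3
          push_cast at h3
          linarith
        rw [haj0]
        calc (1 + (t:ℝ))^(α j0) = (1 + (t:ℝ))^h := by rw [hj0]
          _ ≤ ((2:ℝ)^((K:ℝ) - (σ v:ℝ)))^h :=
              Real.rpow_le_rpow (by positivity) h1 (le_of_lt hh)
      · rw [Function.update_of_ne hj]
        by_cases hjS : j ∈ S'
        · have hαj : α j = h := hS'h j hjS
          have h1 : (1 + (v j:ℝ)) ≤ (2:ℝ)^((Nat.log 2 (v j + 1) : ℝ) + 1) := by
            have h2 : v j + 1 < 2^(Nat.log 2 (v j + 1) + 1) :=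
              Nat.lt_pow_succ_log_self (by norm_num) _
            have h3 : ((v j + 1 : ℕ):ℝ) ≤ ((2^(Nat.log 2 (v j + 1) + 1) : ℕ):ℝ) := by
              exact_mod_cast le_of_lt h2
            have h4 : ((2^(Nat.log 2 (v j + 1) + 1) : ℕ):ℝ)
                = (2:ℝ)^((Nat.log 2 (v j + 1) : ℝ) + 1) := by
              push_cast
              rw [← Real.rpow_natCast 2 (Nat.log 2 (v j + 1) + 1)]
              congr 1
              push_cast
              ring
            rw [h4] at h3
            push_cast at h3
            linarith
          rw [hajS j hj hjS]
          calc (1 + (v j:ℝ))^(α j) = (1 + (v j:ℝ))^h := by rw [hαj]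
            _ ≤ ((2:ℝ)^((Nat.log 2 (v j + 1) : ℝ) + 1))^h :=
                Real.rpow_le_rpow (by positivity) h1 (le_of_lt hh)
        · have hv0 : v j = 0 := by
            have h1 := hvT j
            rw [if_neg hjS] at h1
            simpa using h1
          rw [hv0, hajO j hj hjS, Real.rpow_zero, Real.one_rpow]
          norm_num
    have hsa : ∑ j, a j = (K:ℝ) + ((p-1:ℕ):ℝ) := by
      rw [← Finset.add_sum_erase univ a (Finset.mem_univ j0)]
      have h1 : a j0 = (K:ℝ) - σ v := haj0
      have h2 : ∑ j ∈ univ.erase j0, a j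
          = ∑ j ∈ univ.erase j0, (if j ∈ S' then (Nat.log 2 (v j + 1) : ℝ) + 1 else 0) := by
        apply Finset.sum_congr rfl
        intro j hj
        by_cases hjS : j ∈ S'
        · rw [hajS j (Finset.mem_erase.mp hj).1 hjS, if_pos hjS]
        · rw [hajO j (Finset.mem_erase.mp hj).1 hjS, if_neg hjS]
      have h3 : ∑ j ∈ univ.erase j0, (if j ∈ S' then (Nat.log 2 (v j + 1) : ℝ) + 1 else 0)
          = ∑ j ∈ S', ((Nat.log 2 (v j + 1) : ℝ) + 1) := by
        rw [Finset.sum_ite_mem]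
        congr 1
        rw [Finset.inter_eq_right]
        intro j hjS
        exact Finset.mem_erase.mpr ⟨hS'ne j hjS, Finset.mem_univ j⟩
      have h4 : ∑ j ∈ S', ((Nat.log 2 (v j + 1) : ℝ) + 1) = (σ v:ℝ) + ((p-1:ℕ):ℝ) := by
        rw [Finset.sum_add_distrib, Finset.sum_const, hσ]
        push_cast
        rw [hS'card]
        push_cast
        ring
      rw [h1, h2, h3, h4]
      ring
    have hexp : (∑ j, a j) * h < L := by
      have h1 : K + (p-1) ≤ Kf - 1 := by omega
      have h2 : ((K + (p-1) : ℕ):ℝ) ≤ ((Kf - 1 : ℕ):ℝ) := by exact_mod_cast h1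
      have h3 : ((Kf - 1 : ℕ):ℝ) = (Kf:ℝ) - 1 := by
        push_cast [Nat.cast_sub (by omega : 1 ≤ Kf)]
        ring
      have h4 : (Kf:ℝ) ≤ L/h := Nat.floor_le (by positivity)
      have h5 : ∑ j, a j ≤ (Kf:ℝ) - 1 := by
        rw [hsa]
        rw [h3] at h2
        push_cast at h2 ⊢
        linarith
      calc (∑ j, a j) * h ≤ ((Kf:ℝ) - 1) * h := by
            apply mul_le_mul_of_nonneg_right h5 (le_of_lt hh)
        _ ≤ (L/h - 1) * h := by
            apply mul_le_mul_of_nonneg_right _ (le_of_lt hh)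
            linarith
        _ = L - h := by field_simp
        _ < L := by linarith
    calc ∏ j, (1 + ((Function.update v j0 t) j : ℝ))^(α j)
        ≤ ∏ j, ((2:ℝ) ^ (a j)) ^ h := by
          apply Finset.prod_le_prod
          · intro j _
            apply Real.rpow_nonneg
            positivity
          · intro j _
            exact hfac j
      _ = (2:ℝ) ^ ((∑ j, a j) * h) := by
          rw [Real.rpow_mul (by norm_num : (0:ℝ) ≤ 2), my_rpow_sum 2 two_pos]
          exact Real.finset_prod_rpow univ (fun i => (2:ℝ)^(a i)) (fun i _ => by positivity) h
      _ < (2:ℝ) ^ L := Real.rpow_lt_rpow_of_exponent_lt (by norm_num) hexp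
      _ = r := h2L
  have hlow : c₁ * r^(1/h) * (Real.log r)^(p-1) ≤ (A.ncard:ℝ) := by
    have hsub : (↑Alow : Set (Fin d → ℕ)) ⊆ A := fun x hx => hAmem x (by exact_mod_cast hx)
    have hcard_le : (Alow.card : ℝ) ≤ (A.ncard:ℝ) := by
      have := Set.ncard_le_ncard hsub hAfin
      rw [Set.ncard_coe_finset] at this
      exact_mod_cast this
    have e1 : r^(1/h) * (2:ℝ)^(-((d:ℝ)+1)) ≤ (2:ℝ)^K := by
      rw [← hrL, ← Real.rpow_natCast 2 K, ← Real.rpow_add two_pos]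
      apply Real.rpow_le_rpow_of_exponent_le (by norm_num)
      have h1 : L/h < (Kf:ℝ) + 1 := Nat.lt_floor_add_one _
      rw [hKcast]
      linarith
    have e2 : (cst * Real.log r)^(p-1) ≤ ((m:ℝ)+1)^(p-1) := by
      apply pow_le_pow_left₀ (by positivity)
      have hx : L/(h*(d:ℝ)^2) < (m:ℝ)+1 := Nat.lt_floor_add_one _
      have he : cst * Real.log r = L/(h*(d:ℝ)^2) := by
        rw [hcst, hLlog, div_div, one_div, inv_mul_eq_div]
        congr 1
        ring
      linarith
    calc c₁ * r^(1/h) * (Real.log r)^(p-1)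
        = (r^(1/h) * (2:ℝ)^(-((d:ℝ)+1))) * (cst * Real.log r)^(p-1) := by
          rw [hc₁, mul_pow]
          ring
      _ ≤ (2:ℝ)^K * ((m:ℝ)+1)^(p-1) := by
          apply mul_le_mul e1 e2 (by positivity) (by positivity)
      _ = (Alow.card : ℝ) := by rw [hAlowcard, hTsum]
      _ ≤ (A.ncard:ℝ) := hcard_le
  exact ⟨hlow, hup⟩
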